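/- Assume the negative class-conditionals of train and test coincide (p_n^tr = p_n^te = p_n), with training prior π_tr ∈ [0,1) and test prior π_te ∈ [0,1]. Then the full test risk R_te = π_te E_{p_p^te}[ℓ(g(X),+1)] + (1−π_te) E_{p_n}[ℓ(g(X),−1)] can be written entirely in terms of quantities estimable from the labeled-positive training data, the unlabeled training marginal p_tr, and the unlabeled test marginal p_te: R_te = ( E_{p_te}[ℓ(g(X),+1)] − (1−π_te)·(E_{p_tr}[ℓ(g(X),+1)] − π_tr E_{p_p^tr}[ℓ(g(X),+1)])/(1−π_tr) ) + (1−π_te)·(E_{p_tr}[ℓ(g(X),−1)] − π_tr E_{p_p^tr}[ℓ(g(X),−1)])/(1−π_tr). -/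

import Mathlib

open MeasureTheory

/-- Population-level PURR identity: under a shared negative class-conditional
`p_n`, the full test risk can be written entirely in terms of the labeled
positive train class-conditional `p_p^tr`, the train marginal `p_tr`, and the
test marginal `p_te`. -/
theorem purr_population_identity
    {α : Type*} [MeasurableSpace α]
    (pptr ppte pn : Measure α)
    [IsProbabilityMeasure pptr] [IsProbabilityMeasure ppte]
    [IsProbabilityMeasure pn]
    (πtr : ℝ) (hπtr0 : 0 ≤ πtr) (hπtr1 : πtr < 1)
    (πte : ℝ) (hπte0 : 0 ≤ πte) (hπte1 : πte ≤ 1)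
    (ptr pte : Measure α)
    (hptr : ptr = ENNReal.ofReal πtr • pptr + ENNReal.ofReal (1 - πtr) • pn)
    (hpte : pte = ENNReal.ofReal πte • ppte + ENNReal.ofReal (1 - πte) • pn)
    (g : α → ℝ) (hg : Measurable g)
    (ℓ : ℝ → ℤ → ℝ) (hℓmeas : ∀ y : ℤ, Measurable fun t => ℓ t y)
    (hℓnn : ∀ (t : ℝ) (y : ℤ), 0 ≤ ℓ t y)
    (hint_pptr : ∀ y : ℤ, Integrable (fun x => ℓ (g x) y) pptr)
    (hint_ppte : ∀ y : ℤ, Integrable (fun x => ℓ (g x) y) ppte)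
    (hint_pn : ∀ y : ℤ, Integrable (fun x => ℓ (g x) y) pn) :
    πte * ∫ x, ℓ (g x) 1 ∂ppte + (1 - πte) * ∫ x, ℓ (g x) (-1) ∂pn
      = ((∫ x, ℓ (g x) 1 ∂pte)
          - (1 - πte) * ((∫ x, ℓ (g x) 1 ∂ptr - πtr * ∫ x, ℓ (g x) 1 ∂pptr)
              / (1 - πtr)))
        + (1 - πte) * ((∫ x, ℓ (g x) (-1) ∂ptr - πtr * ∫ x, ℓ (g x) (-1) ∂pptr)
            / (1 - πtr)) := by
  have key : ∀ (y : ℤ) (μ ν : Measure α) (a b : ℝ), 0 ≤ a → 0 ≤ b →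
      Integrable (fun x => ℓ (g x) y) μ → Integrable (fun x => ℓ (g x) y) ν →
      ∫ x, ℓ (g x) y ∂(ENNReal.ofReal a • μ + ENNReal.ofReal b • ν)
        = a * ∫ x, ℓ (g x) y ∂μ + b * ∫ x, ℓ (g x) y ∂ν := by
    intro y μ ν a b ha hb hμ hν
    rw [integral_add_measure (hμ.smul_measure (by simp)) (hν.smul_measure (by simp)),
      integral_smul_measure, integral_smul_measure,
      ENNReal.toReal_ofReal ha, ENNReal.toReal_ofReal hb, smul_eq_mul, smul_eq_mul]
  subst hptr hpte
  rw [key 1 _ _ _ _ hπte0 (by linarith) (hint_ppte 1) (hint_pn 1),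
    key 1 _ _ _ _ hπtr0 (by linarith) (hint_pptr 1) (hint_pn 1),
    key (-1) _ _ _ _ hπtr0 (by linarith) (hint_pptr (-1)) (hint_pn (-1))]
  have h : (1:ℝ) - πtr ≠ 0 := by linarith
  field_simp
  ring
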